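/- Every tree-structured layout L is reachable from the initial layout L₀ by a sequence of layout cuts of length exactly k − 1, where k is the number of parts of the last partition L_B; in particular, every tree-structured layout is reachable from L₀ by at most T − 1 cuts. -/

import Mathlib

/-- `P` is a partition of the finite task set `S` into nonempty pairwise-disjoint task sets. -/
def IsPartition {α : Type*} [DecidableEq α] (S : Finset α) (P : Finset (Finset α)) : Prop :=
  (∀ p ∈ P, p.Nonempty) ∧ (∀ p ∈ P, ∀ q ∈ P, p ≠ q → Disjoint p q) ∧ P.sup id = S

/-- The partition `Q` refines the partition `P`: every part of `Q` is contained in some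
part of `P`. -/
def Refines {α : Type*} (Q P : Finset (Finset α)) : Prop :=
  ∀ q ∈ Q, ∃ p ∈ P, q ⊆ p

/-- A tree-structured layout over the task set `S` with `B` branching points: a sequence of
partitions of `S` such that later partitions refine earlier ones. -/
def IsLayout {α : Type*} [DecidableEq α] (S : Finset α) {B : ℕ}
    (L : Fin B → Finset (Finset α)) : Prop :=
  (∀ i, IsPartition S (L i)) ∧ ∀ i j : Fin B, i ≤ j → Refines (L j) (L i)

/-- `L'` is obtained from the layout `L` by a layout cut: choose an index `i` and a task set
`P` that is a part of `L j` for every `j ≥ i`, divide `P` into two nonempty disjoint sets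
`A`, `B'` with `A ∪ B' = P`; keep `L' j = L j` for `j < i` and for `j ≥ i` replace the part
`P` by the two parts `A` and `B'`. -/
def IsCut {α : Type*} [DecidableEq α] {B : ℕ}
    (L L' : Fin B → Finset (Finset α)) : Prop :=
  ∃ (i : Fin B) (P A B' : Finset α),
    (∀ j, i ≤ j → P ∈ L j) ∧ A.Nonempty ∧ B'.Nonempty ∧ Disjoint A B' ∧ A ∪ B' = P ∧
    (∀ j, j < i → L' j = L j) ∧
    (∀ j, i ≤ j → L' j = insert A (insert B' ((L j).erase P)))

section Helpers
variable {α : Type*} [DecidableEq α] {S : Finset α}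

lemma part_subset {P : Finset (Finset α)} (hP : IsPartition S P)
    {p : Finset α} (hp : p ∈ P) : p ⊆ S := by
  rw [← hP.2.2]; exact Finset.le_sup (f := id) hp

lemma exists_part_mem {P : Finset (Finset α)} (hP : IsPartition S P)
    {x : α} (hx : x ∈ S) : ∃ p ∈ P, x ∈ p := by
  rw [← hP.2.2] at hx
  simpa using Finset.mem_sup.mp hx

/-- each part of P contains some part of Q when Q refines P -/
lemma exists_refining_part {P Q : Finset (Finset α)} (hP : IsPartition S P)
    (hQ : IsPartition S Q) (hR : Refines Q P) {p : Finset α} (hp : p ∈ P) :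
    ∃ q ∈ Q, q ⊆ p ∧ q.Nonempty := by
  obtain ⟨x, hx⟩ := hP.1 p hp
  obtain ⟨q, hq, hxq⟩ := exists_part_mem hQ (part_subset hP hp hx)
  obtain ⟨p', hp', hqp'⟩ := hR q hq
  have hpp' : p = p' := by
    by_contra hne
    exact Finset.disjoint_left.mp (hP.2.1 p hp p' hp' hne) hx (hqp' hxq)
  exact ⟨q, hq, hpp' ▸ hqp', ⟨x, hxq⟩⟩

lemma refines_card_le {P Q : Finset (Finset α)} (hP : IsPartition S P)
    (hQ : IsPartition S Q) (hR : Refines Q P) : P.card ≤ Q.card := by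
  classical
  have key : ∀ p ∈ P, ∃ q ∈ Q, q ⊆ p ∧ q.Nonempty := fun p hp =>
    exists_refining_part hP hQ hR hp
  choose f hf1 hf2 hf3 using key
  have : ∀ p (hp : p ∈ P), f p hp ∈ Q := hf1
  -- use card_le_card_of_injOn with a total function
  let g : Finset α → Finset α := fun p => if hp : p ∈ P then f p hp else ∅
  apply Finset.card_le_card_of_injOn g
  · intro p hp; simp only [g, dif_pos (Finset.mem_coe.mp hp), Finset.mem_coe]; exact hf1 p hp
  · intro p1 h1 p2 h2 heq
    rw [Finset.mem_coe] at h1 h2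
    simp only [g] at heq
    rw [dif_pos h1, dif_pos h2] at heq
    by_contra hne
    obtain ⟨x, hx⟩ := hf3 p1 h1
    have hx2 : x ∈ f p2 h2 := heq ▸ hx
    exact Finset.disjoint_left.mp (hP.2.1 p1 h1 p2 h2 hne) (hf2 p1 h1 hx) (hf2 p2 h2 hx2)

lemma partition_card_le (hS : S.Nonempty) {P : Finset (Finset α)}
    (hP : IsPartition S P) : P.card ≤ S.card := by
  classical
  choose f hf using fun p (hp : p ∈ P) => hP.1 p hp
  let g : Finset α → α := fun p => if hp : p ∈ P then f p hp else hS.choose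
  apply Finset.card_le_card_of_injOn g
  · intro p hp; simp only [g, dif_pos (Finset.mem_coe.mp hp), Finset.mem_coe]; exact part_subset hP hp (hf p hp)
  · intro p1 h1 p2 h2 heq
    rw [Finset.mem_coe] at h1 h2
    simp only [g] at heq
    rw [dif_pos h1, dif_pos h2] at heq
    by_contra hne
    exact Finset.disjoint_left.mp (hP.2.1 p1 h1 p2 h2 hne) (hf p1 h1) (heq ▸ hf p2 h2)

end Helpers

section Chain
variable {α : Type*} [DecidableEq α] {S : Finset α}

lemma refines_eq_of_subset {P Q : Finset (Finset α)} (hP : IsPartition S P)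
    (hQ : IsPartition S Q) (hR : Refines Q P) (hQP : Q ⊆ P) : P = Q := by
  apply Finset.Subset.antisymm _ hQP
  intro p hp
  obtain ⟨q, hq, hqp, hqne⟩ := exists_refining_part hP hQ hR hp
  have : q = p := by
    by_contra hne
    obtain ⟨x, hx⟩ := hqne
    exact Finset.disjoint_left.mp (hP.2.1 q (hQP hq) p hp hne) hx (hqp hx)
  exact this ▸ hq

lemma chain_of_refines {Q : Finset (Finset α)} (hQ : IsPartition S Q) :
    ∀ n (P : Finset (Finset α)), (Q \ P).card = n → IsPartition S P → Refines Q P →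
    ∃ g : ℕ → Finset (Finset α), g 0 = P ∧ g (Q.card - P.card) = Q ∧
      ∀ m < Q.card - P.card, ∃ X A Bb, X ∈ g m ∧ A.Nonempty ∧ Bb.Nonempty ∧
        Disjoint A Bb ∧ A ∪ Bb = X ∧ g (m+1) = insert A (insert Bb ((g m).erase X)) := by
  intro n
  induction n using Nat.strong_induction_on with
  | _ n ih =>
    intro P hn hP hR
    by_cases hPQ : Q ⊆ P
    · have hEq : P = Q := refines_eq_of_subset hP hQ hR hPQ
      subst hEq
      exact ⟨fun _ => P, rfl, by simp, by simp⟩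
    · -- there is q ∈ Q with q ∉ P
      obtain ⟨q, hqQ, hqP⟩ := Finset.not_subset.mp hPQ
      obtain ⟨p, hpP, hqp⟩ := hR q hqQ
      have hqne : q.Nonempty := hQ.1 q hqQ
      have hqneq : q ≠ p := fun h => hqP (h ▸ hpP)
      have hss : q ⊂ p := Finset.ssubset_iff_subset_ne.mpr ⟨hqp, hqneq⟩
      have hpq_ne : (p \ q).Nonempty := by
        obtain ⟨x, hxp, hxq⟩ := Finset.exists_of_ssubset hss
        exact ⟨x, Finset.mem_sdiff.mpr ⟨hxp, hxq⟩⟩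
      have hdisj : Disjoint q (p \ q) := Finset.disjoint_sdiff
      have hunion : q ∪ (p \ q) = p := Finset.union_sdiff_of_subset hqp
      set P' : Finset (Finset α) := insert q (insert (p \ q) (P.erase p)) with hP'def
      -- p ∉ Q
      have hpQ : p ∉ Q := by
        intro hpQ
        obtain ⟨x, hx⟩ := hqne
        exact Finset.disjoint_left.mp (hQ.2.1 q hqQ p hpQ hqneq) hx (hqp hx)
      -- facts about memberships
      have hqnotPQ : q ∉ P.erase p := fun h => hqP (Finset.mem_of_mem_erase h)
      have hpqnotP : p \ q ∉ P := by
        intro h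
        have hne : p \ q ≠ p := by
          intro he
          obtain ⟨x, hx⟩ := hqne
          have : x ∈ p \ q := by rw [he]; exact hqp hx
          exact (Finset.mem_sdiff.mp this).2 hx
        obtain ⟨x, hx⟩ := hpq_ne
        exact Finset.disjoint_left.mp (hP.2.1 (p \ q) h p hpP hne) hx (Finset.mem_sdiff.mp hx).1
      have hpqnotE : p \ q ∉ P.erase p := fun h => hpqnotP (Finset.mem_of_mem_erase h)
      have hqne_pq : q ≠ p \ q := by
        intro h
        obtain ⟨x, hx⟩ := hqne
        exact (Finset.mem_sdiff.mp (h ▸ hx)).2 hx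
      have hqnotI : q ∉ insert (p \ q) (P.erase p) := by
        simp only [Finset.mem_insert]
        push_neg
        exact ⟨hqne_pq, hqnotPQ⟩
      -- cardinality of P'
      have hPcard : 1 ≤ P.card := Finset.card_pos.mpr ⟨p, hpP⟩
      have hP'card : P'.card = P.card + 1 := by
        rw [hP'def, Finset.card_insert_of_notMem hqnotI,
          Finset.card_insert_of_notMem hpqnotE, Finset.card_erase_of_mem hpP]
        omega
      -- subsets of parts other than p are disjoint from q and p\q
      have hsubp : ∀ r ∈ P.erase p, Disjoint r p := by
        intro r hr
        exact hP.2.1 r (Finset.mem_of_mem_erase hr) p hpP (Finset.ne_of_mem_erase hr)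
      -- P' is a partition
      have hP'part : IsPartition S P' := by
        refine ⟨?_, ?_, ?_⟩
        · intro r hr
          rw [hP'def] at hr
          rcases Finset.mem_insert.mp hr with h | h
          · exact h ▸ hqne
          rcases Finset.mem_insert.mp h with h | h
          · exact h ▸ hpq_ne
          · exact hP.1 r (Finset.mem_of_mem_erase h)
        · intro r hr s hs hrs
          rw [hP'def] at hr hs
          have key : ∀ r, r ∈ insert q (insert (p \ q) (P.erase p)) →
              r = q ∨ r = p \ q ∨ r ∈ P.erase p := by
            intro r hr
            rcases Finset.mem_insert.mp hr with h | h
            · exact Or.inl h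
            rcases Finset.mem_insert.mp h with h | h
            · exact Or.inr (Or.inl h)
            · exact Or.inr (Or.inr h)
          rcases key r hr with h1 | h1 | h1 <;> rcases key s hs with h2 | h2 | h2
          · exact absurd (h1.trans h2.symm) hrs
          · rw [h1, h2]; exact hdisj
          · rw [h1]; exact (hsubp s h2).symm.mono_left hqp
          · rw [h1, h2]; exact hdisj.symm
          · exact absurd (h1.trans h2.symm) hrs
          · rw [h1]; exact (hsubp s h2).symm.mono_left Finset.sdiff_subset
          · rw [h2]; exact (hsubp r h1).mono_right hqp
          · rw [h2]; exact (hsubp r h1).mono_right Finset.sdiff_subset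
          · exact hP.2.1 r (Finset.mem_of_mem_erase h1) s (Finset.mem_of_mem_erase h2) hrs
        · rw [hP'def, Finset.sup_insert, Finset.sup_insert]
          simp only [id_eq]
          have hqu : q ⊔ p \ q = p := by rw [Finset.sup_eq_union]; exact hunion
          rw [← sup_assoc, hqu]
          have h1 : (insert p (P.erase p)).sup id = S := by
            rw [Finset.insert_erase hpP]; exact hP.2.2
          rw [Finset.sup_insert] at h1
          simpa using h1
      -- Q refines P'
      have hR' : Refines Q P' := by
        intro q' hq'
        obtain ⟨p'', hp'', hq'p''⟩ := hR q' hq'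
        by_cases hp''p : p'' = p
        · by_cases hq'q : q' = q
          · exact ⟨q, Finset.mem_insert_self _ _, hq'q ▸ Finset.Subset.refl _⟩
          · refine ⟨p \ q, Finset.mem_insert_of_mem (Finset.mem_insert_self _ _), ?_⟩
            intro x hx
            refine Finset.mem_sdiff.mpr ⟨hp''p ▸ hq'p'' hx, fun hxq => ?_⟩
            exact Finset.disjoint_left.mp (hQ.2.1 q' hq' q hqQ hq'q) hx hxq
        · exact ⟨p'', Finset.mem_insert_of_mem (Finset.mem_insert_of_mem
            (Finset.mem_erase.mpr ⟨hp''p, hp''⟩)), hq'p''⟩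
      -- measure decreases
      have hmeas : (Q \ P').card < n := by
        have hsub : Q \ P' ⊆ (Q \ P).erase q := by
          intro x hx
          obtain ⟨hxQ, hxP'⟩ := Finset.mem_sdiff.mp hx
          have hxq : x ≠ q := fun h => hxP' (h ▸ Finset.mem_insert_self _ _)
          refine Finset.mem_erase.mpr ⟨hxq, Finset.mem_sdiff.mpr ⟨hxQ, fun hxP => ?_⟩⟩
          have hxp : x ≠ p := fun h => hpQ (h ▸ hxQ)
          exact hxP' (Finset.mem_insert_of_mem (Finset.mem_insert_of_mem
            (Finset.mem_erase.mpr ⟨hxp, hxP⟩)))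
        have hqmem : q ∈ Q \ P := Finset.mem_sdiff.mpr ⟨hqQ, hqP⟩
        calc (Q \ P').card ≤ ((Q \ P).erase q).card := Finset.card_le_card hsub
          _ = (Q \ P).card - 1 := Finset.card_erase_of_mem hqmem
          _ < n := by
              rw [hn]
              have : 1 ≤ (Q \ P).card := Finset.card_pos.mpr ⟨q, hqmem⟩
              omega
      obtain ⟨g', hg'0, hg'end, hg'cut⟩ := ih _ hmeas P' rfl hP'part hR'
      have hcardle : P'.card ≤ Q.card := refines_card_le hP'part hQ hR'
      have hd : Q.card - P.card = (Q.card - P'.card) + 1 := by omega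
      refine ⟨fun m => if m = 0 then P else g' (m - 1), by simp, ?_, ?_⟩
      · rw [hd]
        simp only [Nat.succ_ne_zero, if_neg]
        simpa using hg'end
      · intro m hm
        by_cases hm0 : m = 0
        · subst hm0
          refine ⟨p, q, p \ q, by simpa using hpP, hqne, hpq_ne, hdisj, hunion, ?_⟩
          simp [hg'0, hP'def]
        · obtain ⟨X, A, Bb, h1, h2, h3, h4, h5, h6⟩ := hg'cut (m - 1) (by omega)
          refine ⟨X, A, Bb, ?_, h2, h3, h4, h5, ?_⟩
          · simpa [if_neg hm0] using h1
          · have hms : m - 1 + 1 = m := by omega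
            rw [hms] at h6
            simp only [if_neg hm0, Nat.succ_ne_zero, if_neg]
            simpa [hms] using h6
end Chain

section Main
variable {α : Type*} [DecidableEq α]

lemma stage (S : Finset α) (hS : S.Nonempty) (B : ℕ)
    (L : Fin B → Finset (Finset α)) (hL : IsLayout S L) :
    ∀ t (ht : t < B),
    ∃ f : ℕ → (Fin B → Finset (Finset α)),
      f 0 = (fun _ : Fin B => ({S} : Finset (Finset α))) ∧
      f ((L ⟨t, ht⟩).card - 1) = (fun j : Fin B => if (j : ℕ) ≤ t then L j else L ⟨t, ht⟩) ∧
      ∀ m < (L ⟨t, ht⟩).card - 1, IsCut (f m) (f (m + 1)) := by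
  intro t
  induction t with
  | zero =>
    intro ht
    have hSpart : IsPartition S ({S} : Finset (Finset α)) := by
      refine ⟨by simpa using hS, by simp, by simp⟩
    have hQ := hL.1 ⟨0, ht⟩
    have hR : Refines (L ⟨0, ht⟩) {S} := fun q hq =>
      ⟨S, Finset.mem_singleton_self S, part_subset hQ hq⟩
    obtain ⟨g, hg0, hgend, hgcut⟩ := chain_of_refines hQ _ {S} rfl hSpart hR
    have hcard1 : ({S} : Finset (Finset α)).card = 1 := Finset.card_singleton S
    refine ⟨fun m => fun _ => g m, by funext j; simp [hg0], ?_, ?_⟩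
    · funext j
      have he : (L ⟨0, ht⟩).card - 1 = (L ⟨0, ht⟩).card - ({S} : Finset (Finset α)).card := by
        rw [hcard1]
      show g ((L ⟨0, ht⟩).card - 1) = _
      rw [he, hgend]
      by_cases hj : (j : ℕ) ≤ 0
      · have hj0 : j = ⟨0, ht⟩ := Fin.ext (Nat.le_zero.mp hj)
        rw [if_pos hj, hj0]
      · rw [if_neg hj]
    · intro m hm
      have hm' : m < (L ⟨0, ht⟩).card - ({S} : Finset (Finset α)).card := by
        rw [hcard1]; exact hm
      obtain ⟨X, A, Bb, h1, h2, h3, h4, h5, h6⟩ := hgcut m hm'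
      exact ⟨⟨0, ht⟩, X, A, Bb, fun j _ => h1, h2, h3, h4, h5,
        fun j hj => absurd (show (j : ℕ) < 0 by simpa [Fin.lt_def] using hj) (Nat.not_lt_zero _),
        fun j _ => h6⟩
  | succ t iht =>
    intro ht
    have ht' : t < B := by omega
    obtain ⟨f, hf0, hfend, hfcut⟩ := iht ht'
    set P := L ⟨t, ht'⟩ with hPdef
    set Q := L ⟨t + 1, ht⟩ with hQdef
    have hPp : IsPartition S P := hL.1 _
    have hQp : IsPartition S Q := hL.1 _
    have hRQP : Refines Q P := hL.2 ⟨t, ht'⟩ ⟨t + 1, ht⟩ (by simp [Fin.le_def])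
    obtain ⟨g, hg0, hgend, hgcut⟩ := chain_of_refines hQp _ P rfl hPp hRQP
    have hPc : 1 ≤ P.card := by
      obtain ⟨x, hx⟩ := hS
      obtain ⟨p, hp, _⟩ := exists_part_mem hPp hx
      exact Finset.card_pos.mpr ⟨p, hp⟩
    have hPQc : P.card ≤ Q.card := refines_card_le hPp hQp hRQP
    set nt := P.card - 1 with hnt
    set d := Q.card - P.card with hd
    have htot : Q.card - 1 = nt + d := by omega
    set F : ℕ → Fin B → Finset (Finset α) :=
      fun m => if m ≤ nt then f m else fun j : Fin B => if (j : ℕ) ≤ t then L j else g (m - nt) with hF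
    have hclaim : ∀ m, nt ≤ m → m ≤ nt + d →
        F m = fun j : Fin B => if (j : ℕ) ≤ t then L j else g (m - nt) := by
      intro m h1 h2
      by_cases hle : m ≤ nt
      · have hmeq : m = nt := le_antisymm hle h1
        subst hmeq
        rw [hF]
        simp only [le_refl, if_pos]
        rw [hfend]
        funext j
        simp only [Nat.sub_self, hg0]
      · rw [hF]; simp only [if_neg hle]
    refine ⟨F, ?_, ?_, ?_⟩
    · rw [hF]; simp only [Nat.zero_le, if_pos]; exact hf0
    · rw [htot, hclaim (nt + d) (by omega) le_rfl]
      funext j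
      by_cases hj : (j : ℕ) ≤ t
      · rw [if_pos hj, if_pos (by omega : (j : ℕ) ≤ t + 1)]
      · by_cases hj' : (j : ℕ) ≤ t + 1
        · have hjt : j = ⟨t + 1, ht⟩ := Fin.ext (by simp only [Fin.val_mk]; omega)
          rw [if_neg hj, if_pos hj', hjt]
          show g (nt + d - nt) = Q
          rw [Nat.add_sub_cancel_left]
          exact hgend
        · rw [if_neg hj, if_neg hj']
          show g (nt + d - nt) = Q
          rw [Nat.add_sub_cancel_left]
          exact hgend
    · intro m hm
      rw [htot] at hm
      by_cases hcase : m + 1 ≤ nt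
      · have e1 : F m = f m := by rw [hF]; simp only [if_pos (by omega : m ≤ nt)]
        have e2 : F (m + 1) = f (m + 1) := by rw [hF]; simp only [if_pos hcase]
        rw [e1, e2]
        exact hfcut m (by omega)
      · have hmn : nt ≤ m := by omega
        have em : F m = fun j : Fin B => if (j : ℕ) ≤ t then L j else g (m - nt) :=
          hclaim m hmn (by omega)
        have em1 : F (m + 1) = fun j : Fin B => if (j : ℕ) ≤ t then L j else g (m + 1 - nt) :=
          hclaim (m + 1) (by omega) (by omega)
        obtain ⟨X, A, Bb, h1, h2, h3, h4, h5, h6⟩ := hgcut (m - nt) (by omega)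
        refine ⟨⟨t + 1, ht⟩, X, A, Bb, ?_, h2, h3, h4, h5, ?_, ?_⟩
        · intro j hj
          rw [em]
          have hjt : ¬ (j : ℕ) ≤ t := by have := Fin.le_def.mp hj; simp at this; omega
          simp only [if_neg hjt]; exact h1
        · intro j hj
          have hjt : (j : ℕ) ≤ t := by have := Fin.lt_def.mp hj; simp at this; omega
          rw [em, em1]; simp only [if_pos hjt]
        · intro j hj
          have hjt : ¬ (j : ℕ) ≤ t := by have := Fin.le_def.mp hj; simp at this; omega
          rw [em, em1]
          simp only [if_neg hjt]
          have hstep : m + 1 - nt = (m - nt) + 1 := by omega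
          rw [hstep, h6]
end Main

/-- Every tree-structured layout `L` is reachable from the initial layout by a sequence of
layout cuts of length exactly `k - 1`, where `k` is the number of parts of the last
partition of `L`; in particular, since `k ≤ |S| = T`, every layout is reachable from the
initial layout by at most `T - 1` cuts. -/
theorem layout_reachable_in_card_sub_one_cuts {α : Type*} [DecidableEq α]
    (S : Finset α) (hS : S.Nonempty) (B : ℕ) (hB : 1 ≤ B)
    (L : Fin B → Finset (Finset α)) (hL : IsLayout S L) :
    (∃ f : ℕ → (Fin B → Finset (Finset α)),
        f 0 = (fun _ : Fin B => ({S} : Finset (Finset α))) ∧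
        f ((L (⟨B - 1, by omega⟩ : Fin B)).card - 1) = L ∧
        ∀ m < (L (⟨B - 1, by omega⟩ : Fin B)).card - 1, IsCut (f m) (f (m + 1))) ∧
      (L (⟨B - 1, by omega⟩ : Fin B)).card - 1 ≤ S.card - 1 := by
  have ht : B - 1 < B := by omega
  obtain ⟨f, hf0, hfend, hfcut⟩ := stage S hS B L hL (B - 1) ht
  constructor
  · refine ⟨f, hf0, ?_, hfcut⟩
    rw [hfend]
    funext j
    have : (j : ℕ) ≤ B - 1 := by have := j.isLt; omega
    rw [if_pos this]
  · have := partition_card_le hS (hL.1 ⟨B - 1, ht⟩)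
    omega
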